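/- Every cycle c off a vertex α on a finite digraph G admits a unique decomposition into a simple cycle off α (its base cycle) together with, for each internal vertex ηᵢ of the base cycle, a finite (possibly empty) ordered sequence of cycles off ηᵢ on the subgraph obtained from G by removing α and the earlier internal vertices, such that nesting these child cycles into the base cycle reproduces c. -/

import Mathlib

variable {V : Type*} [DecidableEq V]

/-- A cycle off `μ` on the digraph `G`: a nontrivial walk starting and ending
at `μ` that does not revisit `μ` internally (represented by its vertex string). -/
def IsCycleOff (G : V → V → Prop) (μ : V) (c : List V) : Prop :=
  c.Chain' G ∧ 2 ≤ c.length ∧ c.head? = some μ ∧ c.getLast? = some μ ∧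
    μ ∉ c.tail.dropLast

/-- A simple cycle off `α`: a cycle whose internal vertices are pairwise
distinct (equivalently, its vertex string with the final `α` removed has no
repetitions). -/
def IsSimpleCycleOff (G : V → V → Prop) (α : V) (s : List V) : Prop :=
  IsCycleOff G α s ∧ s.dropLast.Nodup

/-- The vertex string obtained by nesting the ordered sequence of cycles `cs`
(all closed walks off `μ`) one after another off the vertex `μ`. -/
def block (μ : V) (cs : List (List V)) : List V :=
  (cs.map List.dropLast).flatten ++ [μ]

/-- `CycDecomp G α c s cs` says: `s` is a simple cycle off `α` on `G` with
internal vertices `η₁, …, η_k` (the list `s.tail.dropLast`); for each `i`,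
`cs i` is a finite (possibly empty) ordered sequence of cycles off `ηᵢ` on the
subgraph of `G` obtained by removing `α` and the earlier internal vertices;
and nesting these child cycles into the base cycle `s` reproduces `c`. -/
def CycDecomp (G : V → V → Prop) (α : V) (c s : List V)
    (cs : List (List (List V))) : Prop :=
  IsSimpleCycleOff G α s ∧
  cs.length = s.tail.dropLast.length ∧
  (∀ i : Fin s.tail.dropLast.length, ∀ d ∈ cs.getD i [],
      IsCycleOff G (s.tail.dropLast.get i) d ∧
      ∀ v ∈ d, v ∉ α :: s.tail.dropLast.take i) ∧
  c = α :: ((List.ofFn fun i : Fin s.tail.dropLast.length =>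
      block (s.tail.dropLast.get i) (cs.getD i [])).flatten ++ [α])

set_option linter.unusedSectionVars false

-- auxiliary lemmas
lemma mem_split_first {a : V} : ∀ {l : List V}, a ∈ l → ∃ u r, l = u ++ a :: r ∧ a ∉ u := by
  intro l h
  induction l with
  | nil => simp at h
  | cons b t ih =>
    by_cases hb : a = b
    · exact ⟨[], t, by simp [hb], by simp⟩
    · obtain ⟨u, r, rfl, hu⟩ := ih (by simpa [hb] using h)
      exact ⟨b :: u, r, by simp, by simp [hu, hb]⟩

lemma split_first_unique {a : V} : ∀ {u u' r r' : List V},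
    u ++ a :: r = u' ++ a :: r' → a ∉ u → a ∉ u' → u = u' ∧ r = r' := by
  intro u
  induction u with
  | nil =>
    intro u' r r' h hu hu'
    cases u' with
    | nil => simpa using h
    | cons b t =>
      simp only [List.nil_append, List.cons_append, List.cons.injEq] at h
      exact absurd (h.1 ▸ List.mem_cons_self) hu'
  | cons b t ih =>
    intro u' r r' h hu hu'
    cases u' with
    | nil =>
      simp only [List.nil_append, List.cons_append, List.cons.injEq] at h
      exact absurd (h.1 ▸ List.mem_cons_self) hu
    | cons b' t' =>
      simp only [List.cons_append, List.cons.injEq] at h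
      obtain ⟨rfl, h2⟩ := h
      obtain ⟨h3, h4⟩ := ih h2 (fun hm => hu (List.mem_cons_of_mem _ hm))
        (fun hm => hu' (List.mem_cons_of_mem _ hm))
      exact ⟨by rw [h3], h4⟩

lemma head?_dropLast_of_two_le {l : List V} (h : 2 ≤ l.length) :
    l.dropLast.head? = l.head? := by
  match l with
  | a :: b :: t => simp

lemma dropLast_ne_nil_of_two_le {l : List V} (h : 2 ≤ l.length) : l.dropLast ≠ [] := by
  match l with
  | a :: b :: t => simp

lemma block_ne_nil {μ : V} {cs : List (List V)} : block μ cs ≠ [] := by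
  simp [block]

lemma mem_block_self {μ : V} {cs : List (List V)} : μ ∈ block μ cs := by
  simp [block]

lemma block_head? {μ : V} {cs : List (List V)}
    (h : ∀ d ∈ cs, d.head? = some μ ∧ 2 ≤ d.length) :
    (block μ cs).head? = some μ := by
  cases cs with
  | nil => simp [block]
  | cons d l =>
    obtain ⟨h1, h2⟩ := h d (List.mem_cons_self)
    have hd : d.dropLast ≠ [] := dropLast_ne_nil_of_two_le h2
    simp only [block, List.map_cons, List.flatten_cons, List.append_assoc, List.head?_append]
    rw [(head?_dropLast_of_two_le h2).trans h1]
    rfl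

lemma getLast_block {μ : V} {cs : List (List V)} : (block μ cs).getLast? = some μ := by
  simp [block, List.getLast?_concat]

/-- The nesting of blocks. -/
def Blocks (ηs : List V) (cs : List (List (List V))) : List V :=
  (List.ofFn fun i : Fin ηs.length => block (ηs.get i) (cs.getD i [])).flatten

lemma Blocks_nil {cs : List (List (List V))} : Blocks ([] : List V) cs = [] := by
  simp [Blocks]

lemma Blocks_cons {η : V} {ηs : List V} {e : List (List V)} {cs : List (List (List V))} :
    Blocks (η :: ηs) (e :: cs) = block η e ++ Blocks ηs cs := by
  simp only [Blocks, List.length_cons, List.ofFn_succ, List.flatten_cons]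
  congr 2

lemma Blocks_cons' {η : V} {ηs : List V} {cs : List (List (List V))} :
    Blocks (η :: ηs) cs = block η (cs.getD 0 []) ++ Blocks ηs cs.tail := by
  cases cs with
  | nil =>
    simp only [Blocks, List.length_cons, List.ofFn_succ, List.flatten_cons]
    congr 2
  | cons e cs => simpa using Blocks_cons

lemma mem_Blocks {ηs : List V} : ∀ (cs : List (List (List V))), ∀ v ∈ ηs, v ∈ Blocks ηs cs := by
  induction ηs with
  | nil => simp
  | cons η ηs ih =>
    intro cs v hv
    rw [Blocks_cons']
    rcases List.mem_cons.1 hv with rfl | hv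
    · exact List.mem_append_left _ mem_block_self
    · exact List.mem_append_right _ (ih _ v hv)

lemma Blocks_eq_nil_iff {ηs : List V} {cs : List (List (List V))} :
    Blocks ηs cs = [] ↔ ηs = [] := by
  constructor
  · intro h
    cases ηs with
    | nil => rfl
    | cons η ηs =>
      rw [Blocks_cons'] at h
      exact absurd (List.append_eq_nil_iff.1 h).1 block_ne_nil
  · rintro rfl; exact Blocks_nil

lemma exists_of_mem_Blocks {ηs : List V} {cs : List (List (List V))} {v : V}
    (h : v ∈ Blocks ηs cs) :
    v ∈ ηs ∨ ∃ i : Fin ηs.length, ∃ d ∈ cs.getD ↑i [], v ∈ d := by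
  simp only [Blocks, List.mem_flatten, List.mem_ofFn] at h
  obtain ⟨b, ⟨i, rfl⟩, hv⟩ := h
  rcases List.mem_append.1 hv with hv | hv
  · simp only [List.mem_flatten, List.mem_map] at hv
    obtain ⟨x, ⟨d, hd, rfl⟩, hx⟩ := hv
    exact Or.inr ⟨i, d, hd, (List.dropLast_sublist d).mem hx⟩
  · rw [List.mem_singleton] at hv
    exact Or.inl (hv ▸ (ηs.get_mem i))

lemma block_cons {μ : V} {d : List V} {l : List (List V)} :
    block μ (d :: l) = d.dropLast ++ block μ l := by
  simp [block]

lemma Blocks_head? {ηs : List V} {cs : List (List (List V))}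
    (h : ∀ d ∈ cs.getD 0 [], ∃ μ, ηs.head? = some μ ∧ d.head? = some μ ∧ 2 ≤ d.length) :
    (Blocks ηs cs).head? = ηs.head? := by
  cases ηs with
  | nil => simp [Blocks_nil]
  | cons η ηs =>
    have : ∀ d ∈ cs.getD 0 [], d.head? = some η ∧ 2 ≤ d.length := by
      intro d hd
      obtain ⟨μ, hμ, h1, h2⟩ := h d hd
      simp only [List.head?_cons, Option.some.injEq] at hμ
      exact ⟨hμ ▸ h1, h2⟩
    rw [Blocks_cons', List.head?_append, block_head? this]
    rfl

/-- The invariant for the recursive decomposition. -/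
def Q (G : V → V → Prop) (β : V) (F w ηs : List V)
    (cs : List (List (List V))) : Prop :=
  cs.length = ηs.length ∧
  ηs.Nodup ∧
  (∀ v ∈ ηs, v ∉ F) ∧
  List.Chain' G (ηs ++ [β]) ∧
  ηs.head? = w.head? ∧
  (∀ i : Fin ηs.length, ∀ d ∈ cs.getD ↑i [],
      IsCycleOff G (ηs.get i) d ∧ ∀ v ∈ d, v ∉ F ++ ηs.take ↑i) ∧
  w = Blocks ηs cs

lemma Q_cons_iff {G : V → V → Prop} {β : V} {F w : List V} {η : V} {ηs : List V}
    {e : List (List V)} {cs : List (List (List V))} :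
    Q G β F w (η :: ηs) (e :: cs) ↔
      (cs.length = ηs.length ∧
       η ∉ ηs ∧ ηs.Nodup ∧
       η ∉ F ∧ (∀ v ∈ ηs, v ∉ F) ∧
       (∀ b ∈ (ηs ++ [β]).head?, G η b) ∧ List.Chain' G (ηs ++ [β]) ∧
       some η = w.head? ∧
       (∀ d ∈ e, IsCycleOff G η d ∧ ∀ v ∈ d, v ∉ F) ∧
       (∀ i : Fin ηs.length, ∀ d ∈ cs.getD ↑i [],
          IsCycleOff G (ηs.get i) d ∧ ∀ v ∈ d, v ∉ (F ++ [η]) ++ ηs.take ↑i) ∧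
       w = block η e ++ Blocks ηs cs) := by
  unfold Q
  rw [Blocks_cons, List.nodup_cons, List.forall_mem_cons, List.cons_append]
  simp only [List.Chain', List.isChain_cons]
  have hfin : (∀ i : Fin (η :: ηs).length, ∀ d ∈ (e :: cs).getD ↑i [],
        IsCycleOff G ((η :: ηs).get i) d ∧ ∀ v ∈ d, v ∉ F ++ (η :: ηs).take ↑i) ↔
      ((∀ d ∈ e, IsCycleOff G η d ∧ ∀ v ∈ d, v ∉ F) ∧
       (∀ i : Fin ηs.length, ∀ d ∈ cs.getD ↑i [],
          IsCycleOff G (ηs.get i) d ∧ ∀ v ∈ d, v ∉ (F ++ [η]) ++ ηs.take ↑i)) := by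
    constructor
    · intro h
      refine ⟨?_, ?_⟩
      · intro d hd
        have := h ⟨0, by simp⟩ d (by simpa using hd)
        simpa using this
      · intro i d hd
        have hi : (i : ℕ) + 1 < (η :: ηs).length := by
          simpa using i.2
        have := h ⟨(i : ℕ) + 1, hi⟩ d (by simpa using hd)
        simpa [List.take_succ_cons, List.append_assoc] using this
    · rintro ⟨h0, hs⟩ ⟨iv, hi⟩ d hd
      cases iv with
      | zero =>
        have := h0 d (by simpa using hd)
        simpa using this
      | succ m =>
        have hm : m < ηs.length := by simpa using hi
        have := hs ⟨m, hm⟩ d (by simpa using hd)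
        simpa [List.take_succ_cons, List.append_assoc] using this
  rw [hfin]
  simp only [List.head?_cons, List.length_cons, add_left_inj]
  tauto

lemma head?_eq_cons {l : List V} {a : V} (h : l.head? = some a) :
    ∃ t, l = a :: t := by
  cases l with
  | nil => simp at h
  | cons b t =>
    simp only [List.head?_cons, Option.some.injEq] at h
    exact ⟨t, by rw [h]⟩

lemma core (G : V → V → Prop) (β : V) :
    ∀ n (F w : List V), w.length ≤ n → w ≠ [] →
      List.Chain' G (w ++ [β]) → (∀ v ∈ w, v ∉ F) →
      ∃! p : List V × List (List (List V)), Q G β F w p.1 p.2 := by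
  intro n
  induction n with
  | zero =>
    intro F w hl hw _ _
    exact absurd (List.length_eq_zero_iff.1 (Nat.le_zero.1 hl)) hw
  | succ n ih =>
    intro F w hl hw hchain hF
    obtain ⟨η, t, rfl⟩ := List.exists_cons_of_ne_nil hw
    by_cases hη : η ∈ t
    · -- Case B : η occurs again
      obtain ⟨u, r, rfl, hu⟩ := mem_split_first hη
      have hl' : (η :: r).length ≤ n := by
        simp only [List.length_cons, List.length_append] at hl ⊢
        omega
      have hsplit : (η :: (u ++ η :: r)) ++ [β] =
          ((η :: u) ++ [η]) ++ (r ++ [β]) := by simp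
      have hsplit2 : (η :: (u ++ η :: r)) ++ [β] =
          (η :: u) ++ ((η :: r) ++ [β]) := by simp
      have hchain' : List.Chain' G ((η :: r) ++ [β]) := by
        rw [hsplit2] at hchain
        exact hchain.right_of_append
      have hF' : ∀ v ∈ η :: r, v ∉ F := by
        intro v hv
        apply hF
        rcases List.mem_cons.1 hv with rfl | hv
        · exact List.mem_cons_self
        · exact List.mem_cons_of_mem _ (List.mem_append_right _ (List.mem_cons_of_mem _ hv))
      obtain ⟨⟨ηs', cs'⟩, hQ', huniq'⟩ :=
        ih F (η :: r) hl' (List.cons_ne_nil _ _) hchain' hF'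
      obtain ⟨t2, rfl⟩ : ∃ t2, ηs' = η :: t2 := head?_eq_cons (by
        have := hQ'.2.2.2.2.1
        simpa using this)
      obtain ⟨e', cs2', rfl⟩ : ∃ e' cs2', cs' = e' :: cs2' := by
        have hlen := hQ'.1
        cases cs' with
        | nil => simp at hlen
        | cons e' cs2' => exact ⟨e', cs2', rfl⟩
      have parts' := Q_cons_iff.mp hQ'
      -- the first cycle
      have hdrop : ((η :: u) ++ [η]).dropLast = η :: u := by
        rw [List.dropLast_concat]
      have hd_cyc : IsCycleOff G η ((η :: u) ++ [η]) := by
        refine ⟨?_, ?_, ?_, ?_, ?_⟩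
        · rw [hsplit] at hchain
          exact hchain.left_of_append
        · simp
        · simp
        · exact List.getLast?_concat
        · rw [List.cons_append, List.tail_cons, List.dropLast_concat]
          exact hu
      have hd_avoid : ∀ v ∈ (η :: u) ++ [η], v ∉ F := by
        intro v hv
        apply hF
        simp only [List.mem_append, List.mem_cons, List.mem_singleton] at hv
        simp only [List.mem_cons, List.mem_append]
        tauto
      refine ⟨(η :: t2, (((η :: u) ++ [η]) :: e') :: cs2'), Q_cons_iff.2 ?_, ?_⟩
      · obtain ⟨p1, p2, p3, p4, p5, p6, p7, p8, p9, p10, p11⟩ := parts'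
        refine ⟨by simpa using p1, p2, p3, p4, p5, p6, p7, rfl, ?_, p10, ?_⟩
        · intro d hd
          rcases List.mem_cons.1 hd with rfl | hd
          · exact ⟨hd_cyc, hd_avoid⟩
          · exact p9 d hd
        · rw [block_cons, hdrop, List.append_assoc, ← p11]
          simp
      · rintro ⟨ηs, cs⟩ hq
        obtain ⟨ηs2, rfl⟩ : ∃ ηs2, ηs = η :: ηs2 := head?_eq_cons (by
          have := hq.2.2.2.2.1
          simpa using this)
        obtain ⟨e, cs2, rfl⟩ : ∃ e cs2, cs = e :: cs2 := by
          have hlen := hq.1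
          cases cs with
          | nil => simp at hlen
          | cons e cs2 => exact ⟨e, cs2, rfl⟩
        obtain ⟨p1, p2, p3, p4, p5, p6, p7, p8, p9, p10, p11⟩ := Q_cons_iff.mp hq
        -- e is nonempty
        obtain ⟨d', l, rfl⟩ : ∃ d' l, e = d' :: l := by
          cases e with
          | nil =>
            exfalso
            simp only [block, List.map_nil, List.flatten_nil, List.nil_append,
              List.singleton_append] at p11
            have hmem : η ∈ Blocks ηs2 cs2 := by
              rw [← (List.cons_injective.eq_iff.mp p11 ▸ rfl : u ++ η :: r = Blocks ηs2 cs2)]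
              exact List.mem_append_right _ (List.mem_cons_self)
            rcases exists_of_mem_Blocks hmem with hm | ⟨i, d, hd, hvd⟩
            · exact p2 hm
            · exact (p10 i d hd).2 η hvd (by simp)
          | cons d' l => exact ⟨d', l, rfl⟩
        obtain ⟨hcyc', havoid'⟩ := p9 d' (List.mem_cons_self)
        obtain ⟨hch', hlen', hhead', hlast', hint'⟩ := hcyc'
        obtain ⟨dt, rfl⟩ := head?_eq_cons hhead'
        have hdtne : dt ≠ [] := by
          intro h
          rw [h] at hlen'
          simp at hlen'
        have hdt : dt = dt.dropLast ++ [η] := by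
          have h1 : dt.getLast hdtne = η := by
            have := hlast'
            rw [List.getLast?_cons, List.getLast?_eq_getLast hdtne] at this
            · simpa using this
          conv_lhs => rw [← List.dropLast_append_getLast hdtne, h1]
        have hddrop : (η :: dt).dropLast = η :: dt.dropLast := by
          rw [List.dropLast_cons_of_ne_nil hdtne]
        have hbody : η ∉ dt.dropLast := by simpa using hint'
        -- block head of l part
        have hZhead : (block η l ++ Blocks ηs2 cs2).head? = some η := by
          rw [List.head?_append, block_head? ?_]
          · rfl
          · intro d hd
            obtain ⟨hc, _⟩ := p9 d (List.mem_cons_of_mem _ hd)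
            exact ⟨hc.2.2.1, hc.2.1⟩
        obtain ⟨ztail, hZ⟩ := head?_eq_cons hZhead
        have hkey : u ++ η :: r = dt.dropLast ++ η :: ztail := by
          have := p11
          rw [block_cons, hddrop, List.append_assoc, hZ] at this
          simpa using this
        obtain ⟨hu_eq, hr_eq⟩ := split_first_unique hkey hu hbody
        -- Q for the shorter word
        have hq2 : Q G β F (η :: r) (η :: ηs2) (l :: cs2) := by
          refine Q_cons_iff.2 ⟨by simpa using p1, p2, p3, p4, p5, p6, p7, rfl, ?_, p10, ?_⟩
          · intro d hd
            exact p9 d (List.mem_cons_of_mem _ hd)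
          · rw [hZ, hr_eq]
        have heq := huniq' (η :: ηs2, l :: cs2) hq2
        have heq1 : η :: ηs2 = η :: t2 := congrArg Prod.fst heq
        have heq2 : l :: cs2 = e' :: cs2' := congrArg Prod.snd heq
        obtain rfl : ηs2 = t2 := by injection heq1
        obtain ⟨rfl, rfl⟩ : l = e' ∧ cs2 = cs2' := by
          constructor <;> injection heq2
        have hd'eq : η :: dt = (η :: u) ++ [η] := by
          rw [List.cons_append]
          congr 1
          rw [hdt, hu_eq]
        rw [hd'eq]
    · -- Case A : η does not occur again
      rcases eq_or_ne t [] with rfl | ht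
      · -- A1 : w = [η]
        refine ⟨([η], [[]]), Q_cons_iff.2 ?_, ?_⟩
        · refine ⟨rfl, by simp, by simp, hF η (List.mem_cons_self), by simp, ?_,
            List.isChain_singleton _, rfl, by simp, fun i => i.elim0, by simp [block, Blocks_nil]⟩
          intro b hb
          simp only [List.nil_append, List.head?_cons, Option.mem_def,
            Option.some.injEq] at hb
          subst hb
          exact List.isChain_pair.mp (by simpa [List.Chain'] using hchain)
        · rintro ⟨ηs, cs⟩ hq
          obtain ⟨ηs2, rfl⟩ : ∃ ηs2, ηs = η :: ηs2 := head?_eq_cons (by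
            have := hq.2.2.2.2.1
            simpa using this)
          obtain ⟨e, cs2, rfl⟩ : ∃ e cs2, cs = e :: cs2 := by
            have hlen := hq.1
            cases cs with
            | nil => simp at hlen
            | cons e cs2 => exact ⟨e, cs2, rfl⟩
          obtain ⟨p1, p2, p3, p4, p5, p6, p7, p8, p9, p10, p11⟩ := Q_cons_iff.mp hq
          have hlen := congrArg List.length p11
          simp only [block, List.length_append, List.length_cons,
            List.length_singleton] at hlen
          have hBnil : Blocks ηs2 cs2 = [] := by
            rw [← List.length_eq_zero_iff]
            omega
          obtain rfl : ηs2 = [] := Blocks_eq_nil_iff.1 hBnil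
          obtain rfl : cs2 = [] := List.length_eq_zero_iff.1 (by simpa using p1)
          obtain rfl : e = [] := by
            cases e with
            | nil => rfl
            | cons d l =>
              exfalso
              have hc := (p9 d (List.mem_cons_self)).1
              have h2 : d.dropLast ≠ [] := dropLast_ne_nil_of_two_le hc.2.1
              have : (List.map List.dropLast (d :: l)).flatten.length ≠ 0 := by
                simp only [List.map_cons, List.flatten_cons, List.length_append]
                intro h
                exact h2 (List.length_eq_zero_iff.1 (by omega))
              omega
          rfl
      · -- A2 : t ≠ []
        have hlt : t.length ≤ n := by
          simp only [List.length_cons] at hl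
          omega
        have hchain' : List.Chain' G (t ++ [β]) :=
          (List.isChain_cons.1 (show List.IsChain G (η :: (t ++ [β])) from hchain)).2
        have hF' : ∀ v ∈ t, v ∉ F ++ [η] := by
          intro v hv
          simp only [List.mem_append, List.mem_singleton]
          push_neg
          exact ⟨hF v (List.mem_cons_of_mem _ hv), fun h => hη (h ▸ hv)⟩
        obtain ⟨⟨ηs', cs'⟩, hQ', huniq'⟩ := ih (F ++ [η]) t hlt ht hchain' hF'
        have hηs'head : ηs'.head? = t.head? := hQ'.2.2.2.2.1
        have hηs'ne : ηs' ≠ [] := by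
          intro h
          rw [h] at hηs'head
          cases t with
          | nil => exact ht rfl
          | cons a t' => simp at hηs'head
        refine ⟨(η :: ηs', [] :: cs'), Q_cons_iff.2 ?_, ?_⟩
        · obtain ⟨q1, q2, q3, q4, q5, q6, q7⟩ := hQ'
          refine ⟨q1, ?_, q2, hF η (List.mem_cons_self), ?_, ?_, q4, rfl,
            by simp, q6, ?_⟩
          · intro h
            exact (q3 η h) (by simp)
          · intro v hv hvF
            exact (q3 v hv) (List.mem_append_left _ hvF)
          · intro b hb
            have hch2 := (List.isChain_cons.1 (show List.IsChain G (η :: (t ++ [β])) from hchain)).1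
            apply hch2
            rw [List.head?_append] at hb ⊢
            rw [hηs'head] at hb
            exact hb
          · rw [show block η [] = [η] by simp [block], ← q7]
            simp
        · rintro ⟨ηs, cs⟩ hq
          obtain ⟨ηs2, rfl⟩ : ∃ ηs2, ηs = η :: ηs2 := head?_eq_cons (by
            have := hq.2.2.2.2.1
            simpa using this)
          obtain ⟨e, cs2, rfl⟩ : ∃ e cs2, cs = e :: cs2 := by
            have hlen := hq.1
            cases cs with
            | nil => simp at hlen
            | cons e cs2 => exact ⟨e, cs2, rfl⟩
          obtain ⟨p1, p2, p3, p4, p5, p6, p7, p8, p9, p10, p11⟩ := Q_cons_iff.mp hq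
          obtain rfl : e = [] := by
            cases e with
            | nil => rfl
            | cons d l =>
              exfalso
              have hc := (p9 d (List.mem_cons_self)).1
              obtain ⟨dt, rfl⟩ := head?_eq_cons hc.2.2.1
              have hdtne : dt ≠ [] := by
                intro h
                rw [h] at hc
                have := hc.2.1
                simp at this
              have hddrop : (η :: dt).dropLast = η :: dt.dropLast :=
                List.dropLast_cons_of_ne_nil hdtne
              have hmem : η ∈ t := by
                have h11 := p11
                rw [block_cons, hddrop, List.append_assoc] at h11
                have h11' : t = dt.dropLast ++ (block η l ++ Blocks ηs2 cs2) := by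
                  injection h11
                rw [h11']
                exact List.mem_append_right _ (List.mem_append_left _ mem_block_self)
              exact hη hmem
          have hteq : t = Blocks ηs2 cs2 := by
            have h11 := p11
            rw [show block η [] = [η] by simp [block]] at h11
            injection h11
          have hηs2ne : ηs2 ≠ [] := by
            intro h
            rw [h, Blocks_nil] at hteq
            exact ht hteq
          have hhead2 : ηs2.head? = t.head? := by
            rw [hteq]
            refine (Blocks_head? ?_).symm
            intro d hd
            obtain ⟨b, ηs3, rfl⟩ := List.exists_cons_of_ne_nil hηs2ne
            have := p10 ⟨0, by simp⟩ d hd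
            exact ⟨b, rfl, this.1.2.2.1, this.1.2.1⟩
          have hq2 : Q G β (F ++ [η]) t ηs2 cs2 := by
            refine ⟨p1, p3, ?_, p7, hhead2, p10, hteq⟩
            intro v hv
            simp only [List.mem_append, List.mem_singleton]
            push_neg
            exact ⟨p5 v hv, fun h => p2 (h ▸ hv)⟩
          have heq := huniq' (ηs2, cs2) hq2
          have heq1 : ηs2 = ηs' := congrArg Prod.fst heq
          have heq2 : cs2 = cs' := congrArg Prod.snd heq
          rw [heq1, heq2]

lemma Blocks_head?_of_cycles {G : V → V → Prop} {ηs : List V} {cs : List (List (List V))}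
    (h : ∀ i : Fin ηs.length, ∀ d ∈ cs.getD ↑i [], IsCycleOff G (ηs.get i) d) :
    (Blocks ηs cs).head? = ηs.head? := by
  cases ηs with
  | nil => simp [Blocks_nil]
  | cons b l =>
    refine Blocks_head? ?_
    intro d hd
    have := h ⟨0, by simp⟩ d hd
    exact ⟨b, rfl, this.2.2.1, this.2.1⟩

lemma shape_of_cycleOff {G : V → V → Prop} {α : V} {s : List V}
    (h : IsCycleOff G α s) : s = α :: (s.tail.dropLast ++ [α]) := by
  obtain ⟨-, hlen, hhead, hlast, -⟩ := h
  obtain ⟨st, rfl⟩ := head?_eq_cons hhead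
  have hstne : st ≠ [] := by
    intro h
    rw [h] at hlen
    simp at hlen
  have hst : st.getLast? = some α := by
    obtain ⟨b, st', rfl⟩ := List.exists_cons_of_ne_nil hstne
    rwa [List.getLast?_cons_cons] at hlast
  rw [List.tail_cons]
  congr 1
  exact (List.dropLast_append_getLast? _ hst).symm

lemma cycDecomp_shape {G : V → V → Prop} {α : V} {c : List V} {ηs : List V}
    {cs : List (List (List V))} :
    CycDecomp G α c (α :: (ηs ++ [α])) cs ↔
      (IsSimpleCycleOff G α (α :: (ηs ++ [α])) ∧
       cs.length = ηs.length ∧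
       (∀ i : Fin ηs.length, ∀ d ∈ cs.getD ↑i [],
          IsCycleOff G (ηs.get i) d ∧ ∀ v ∈ d, v ∉ α :: ηs.take ↑i) ∧
       c = α :: (Blocks ηs cs ++ [α])) := by
  unfold CycDecomp Blocks
  rw [show (α :: (ηs ++ [α])).tail.dropLast = ηs from by
    rw [List.tail_cons, List.dropLast_concat]]

lemma key (G : V → V → Prop) (α : V) (w : List V)
    (hchain : List.Chain' G (α :: (w ++ [α]))) (hint : α ∉ w) :
    ∃! scs : List V × List (List (List V)),
      CycDecomp G α (α :: (w ++ [α])) scs.1 scs.2 := by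
  rcases eq_or_ne w [] with rfl | hwne
  · refine ⟨(α :: ([] ++ [α]), []),
      cycDecomp_shape.2 ⟨?_, rfl, fun i => i.elim0, by rw [Blocks_nil]⟩, ?_⟩
    · refine ⟨⟨by simpa using hchain, by simp, rfl, by simp, by simp⟩, by simp⟩
    · rintro ⟨s, cs⟩ hd
      have hs : s = α :: (s.tail.dropLast ++ [α]) := shape_of_cycleOff hd.1.1
      rw [hs] at hd
      obtain ⟨hsimp, hlen, hcyc, heq⟩ := cycDecomp_shape.1 hd
      have h2 : ([] : List V) ++ [α] = Blocks s.tail.dropLast cs ++ [α] := by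
        injection heq
      have hB : Blocks s.tail.dropLast cs = [] := (List.append_cancel_right h2).symm
      have hηs : s.tail.dropLast = [] := Blocks_eq_nil_iff.1 hB
      have hcs : cs = [] := by
        rw [hηs] at hlen
        exact List.length_eq_zero_iff.1 (by simpa using hlen)
      rw [hs, hηs, hcs]
  · have hch' : List.Chain' G (w ++ [α]) := (List.isChain_cons.1 hchain).2
    have hF : ∀ v ∈ w, v ∉ ([α] : List V) := by
      intro v hv
      simp only [List.mem_singleton]
      exact fun h => hint (h ▸ hv)
    obtain ⟨⟨ηs, cs⟩, hQ, huniq⟩ := core G α w.length [α] w le_rfl hwne hch' hF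
    obtain ⟨q1, q2, q3, q4, q5, q6, q7⟩ := hQ
    have hανηs : α ∉ ηs := fun h => q3 α h (by simp)
    refine ⟨(α :: (ηs ++ [α]), cs), cycDecomp_shape.2 ⟨?_, q1, ?_, ?_⟩, ?_⟩
    · have hedge : ∀ b ∈ (ηs ++ [α]).head?, G α b := by
        intro b hb
        have hch2 := (List.isChain_cons.1 hchain).1
        apply hch2
        rw [List.head?_append] at hb ⊢
        rw [q5] at hb
        exact hb
      refine ⟨⟨List.isChain_cons.2 ⟨hedge, q4⟩, by simp, rfl, ?_, ?_⟩, ?_⟩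
      · rw [show α :: (ηs ++ [α]) = (α :: ηs) ++ [α] by simp, List.getLast?_concat]
      · rw [List.tail_cons, List.dropLast_concat]
        exact hανηs
      · rw [show (α :: (ηs ++ [α])).dropLast = α :: ηs from by
          rw [List.dropLast_cons_of_ne_nil (by simp), List.dropLast_concat]]
        exact List.nodup_cons.2 ⟨hανηs, q2⟩
    · intro i d hd
      have := q6 i d hd
      simpa using this
    · rw [q7]
    · rintro ⟨s, cs'⟩ hd
      have hs : s = α :: (s.tail.dropLast ++ [α]) := shape_of_cycleOff hd.1.1
      rw [hs] at hd
      obtain ⟨hsimp, hlen2, hcyc2, heq2⟩ := cycDecomp_shape.1 hd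
      have hweq : w = Blocks s.tail.dropLast cs' := by
        have h2 : w ++ [α] = Blocks s.tail.dropLast cs' ++ [α] := by injection heq2
        exact List.append_cancel_right h2
      have hnd : (α :: s.tail.dropLast).Nodup := by
        have h3 := hsimp.2
        rwa [show (α :: (s.tail.dropLast ++ [α])).dropLast = α :: s.tail.dropLast from by
          rw [List.dropLast_cons_of_ne_nil (by simp), List.dropLast_concat]] at h3
      have hq2 : Q G α [α] w s.tail.dropLast cs' := by
        refine ⟨hlen2, (List.nodup_cons.1 hnd).2, ?_, ?_, ?_, ?_, hweq⟩
        · intro v hv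
          simp only [List.mem_singleton]
          exact fun h => (List.nodup_cons.1 hnd).1 (h ▸ hv)
        · exact (List.isChain_cons.1 hsimp.1.1).2
        · rw [hweq]
          exact (Blocks_head?_of_cycles (fun i d hd' => (hcyc2 i d hd').1)).symm
        · intro i d hd'
          have := hcyc2 i d hd'
          simpa using this
      have heq3 := huniq (s.tail.dropLast, cs') hq2
      have e1 : s.tail.dropLast = ηs := congrArg Prod.fst heq3
      have e2 : cs' = cs := congrArg Prod.snd heq3
      rw [hs, e1, e2]

/-- **prime factorisation of cycles.** Every cycle `c` off a
vertex `α` on a finite digraph `G` admits a unique decomposition into a simple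
cycle off `α` (its base cycle) together with, for each internal vertex of the
base cycle, a finite (possibly empty) ordered sequence of cycles off that
vertex on the subgraph obtained by removing `α` and the earlier internal
vertices, such that nesting these child cycles into the base cycle
reproduces `c`. -/
theorem cycle_prime_factorisation [Fintype V] (G : V → V → Prop) (α : V)
    (c : List V) (hc : IsCycleOff G α c) :
    ∃! scs : List V × List (List (List V)), CycDecomp G α c scs.1 scs.2 := by
  have hshape := shape_of_cycleOff hc
  have h1 : List.Chain' G (α :: (c.tail.dropLast ++ [α])) := by
    rw [← hshape]
    exact hc.1
  rw [hshape]
  exact key G α c.tail.dropLast h1 hc.2.2.2.2
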